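/- arXiv:2509.16940 — 3 statements merged into one kernel-verified Lean document; each statement's English description precedes it below -/
import Mathlib

section
/- Let B, α, γ be positive real numbers and let u ∈ (0, 1). Then the 4×4 symmetric matrix H(u) with rows (B/u + B/(1−u) + 1/γ², −1, 0, 0), (−1, α + γ², 0, 0), (0, 0, 1, 0), (0, 0, 0, 1) is positive definite. -/
/-- For `B, α, γ > 0` and `u ∈ (0,1)`, the Hessian of the integrand of the
convex part of the Keller–Segel free energy,
`H(u) = [[B/u + B/(1−u) + 1/γ², −1, 0, 0], [−1, α + γ², 0, 0], [0,0,1,0], [0,0,0,1]]`,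
is positive definite. -/
theorem stmt_2 (B α γ u : ℝ) (hB : 0 < B) (hα : 0 < α) (hγ : 0 < γ)
    (hu0 : 0 < u) (hu1 : u < 1) :
    (!![B / u + B / (1 - u) + 1 / γ ^ 2, -1, 0, 0;
        -1, α + γ ^ 2, 0, 0;
        0, 0, 1, 0;
        0, 0, 0, 1] : Matrix (Fin 4) (Fin 4) ℝ).PosDef := by
  have hu1' : 0 < 1 - u := by linarith
  have ha : 0 < B / u := div_pos hB hu0
  have hb : 0 < B / (1 - u) := div_pos hB hu1'
  have hg2 : (0:ℝ) < γ ^ 2 := by positivity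
  rw [Matrix.posDef_iff_dotProduct_mulVec]
  constructor
  · ext i j
    fin_cases i <;> fin_cases j <;>
      simp [Matrix.conjTranspose_apply, Matrix.vecHead, Matrix.vecTail]
  · intro x hx
    have key : x 0 ≠ 0 ∨ x 1 ≠ 0 ∨ x 2 ≠ 0 ∨ x 3 ≠ 0 := by
      by_contra h
      push_neg at h
      apply hx
      ext i
      fin_cases i <;> simp [h.1, h.2.1, h.2.2.1, h.2.2.2]
    have hform : dotProduct (star x)
        ((!![B / u + B / (1 - u) + 1 / γ ^ 2, -1, 0, 0;
        -1, α + γ ^ 2, 0, 0;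
        0, 0, 1, 0;
        0, 0, 0, 1] : Matrix (Fin 4) (Fin 4) ℝ).mulVec x) =
        B / u * (x 0)^2 + B / (1 - u) * (x 0)^2 + α * (x 1)^2 + (x 2)^2 + (x 3)^2 +
          (x 0 / γ - γ * x 1)^2 := by
      simp [Matrix.mulVec, dotProduct, Fin.sum_univ_four, Matrix.vecHead,
        Matrix.vecTail]
      field_simp
      ring
    rw [hform]
    have h1 : (0:ℝ) ≤ (x 0 / γ - γ * x 1)^2 := sq_nonneg _
    have h2 : (0:ℝ) ≤ B / u * (x 0)^2 := by positivity
    have h3 : (0:ℝ) ≤ B / (1 - u) * (x 0)^2 := by positivity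
    have h4 : (0:ℝ) ≤ α * (x 1)^2 := by positivity
    have h5 : (0:ℝ) ≤ (x 2)^2 := sq_nonneg _
    have h6 : (0:ℝ) ≤ (x 3)^2 := sq_nonneg _
    rcases key with h | h | h | h
    · have : 0 < B / u * (x 0)^2 := by positivity
      linarith
    · have : 0 < α * (x 1)^2 := by positivity
      linarith
    · have : 0 < (x 2)^2 := by positivity
      linarith
    · have : 0 < (x 3)^2 := by positivity
      linarith
end

section
/- Let n ≥ 1, let w₁, …, wₙ be positive real numbers, let a₀ ∈ (0, 1), let M be a symmetric positive semidefinite real n×n matrix, let b ∈ ℝⁿ, and let B > 0. Let F̄ : [0, 1] → ℝ be the continuous extension of F(s) = s·log s + (1−s)·log(1−s), with F̄(0) = F̄(1) = 0. Define G(x) = (1/2)·xᵀMx + bᵀx + B·Σᵢ F̄(xᵢ) on the compact convex set A = {x ∈ ℝⁿ : 0 ≤ xᵢ ≤ 1 for all i, and Σᵢ wᵢ·xᵢ = a₀·Σᵢ wᵢ}. Then G attains a minimum on A at a unique point x*, and this minimizer satisfies 0 < x*ᵢ < 1 for every i. -/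
open Matrix

/-- The continuous extension `F̄` of the entropy density `F(s) = s·log s + (1−s)·log(1−s)`
to `[0, 1]`; since `Real.log 0 = 0` in Lean, this formula already satisfies
`F̄(0) = F̄(1) = 0` and agrees with `F` on `(0, 1)`. -/
noncomputable def Fbar (s : ℝ) : ℝ := s * Real.log s + (1 - s) * Real.log (1 - s)

lemma Fbar_continuous : Continuous Fbar := by
  have h := Real.continuous_mul_log
  exact h.add (h.comp (continuous_const.sub continuous_id))

lemma Fbar_zero : Fbar 0 = 0 := by simp [Fbar]
lemma Fbar_one : Fbar 1 = 0 := by simp [Fbar]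
lemma Fbar_symm (s : ℝ) : Fbar (1 - s) = Fbar s := by
  simp only [Fbar, sub_sub_cancel]; ring

lemma mul_log_lower {s : ℝ} (h0 : 0 ≤ s) : -1 ≤ s * Real.log s := by
  rcases eq_or_lt_of_le h0 with h | h
  · simp [← h]
  · have hl := Real.log_le_sub_one_of_pos (inv_pos.mpr h)
    rw [Real.log_inv] at hl
    have := mul_le_mul_of_nonneg_left hl (le_of_lt h)
    have hinv : s * s⁻¹ = 1 := mul_inv_cancel₀ (ne_of_gt h)
    nlinarith

lemma Fbar_lower {s : ℝ} (h0 : 0 ≤ s) (h1 : s ≤ 1) : -2 ≤ Fbar s := by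
  have := mul_log_lower h0
  have := mul_log_lower (s := 1 - s) (by linarith)
  unfold Fbar; linarith

lemma strictConvexOn_Fbar : StrictConvexOn ℝ (Set.Icc (0:ℝ) 1) Fbar := by
  refine ⟨convex_Icc 0 1, fun x hx y hy hxy a c ha hc hac => ?_⟩
  obtain ⟨hx0, hx1⟩ := hx
  obtain ⟨hy0, hy1⟩ := hy
  have h1 := Real.strictConvexOn_mul_log.2 (Set.mem_Ici.mpr hx0) (Set.mem_Ici.mpr hy0)
      hxy ha hc hac
  have h2 := Real.strictConvexOn_mul_log.2 (Set.mem_Ici.mpr (by linarith : (0:ℝ) ≤ 1 - x))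
      (Set.mem_Ici.mpr (by linarith : (0:ℝ) ≤ 1 - y))
      (fun h => hxy (by linarith)) ha hc hac
  simp only [smul_eq_mul] at h1 h2 ⊢
  have key : 1 - (a * x + c * y) = a * (1 - x) + c * (1 - y) := by linear_combination -hac
  simp only [Fbar, key]
  linarith

lemma convexOn_Fbar : ConvexOn ℝ (Set.Icc (0:ℝ) 1) Fbar := strictConvexOn_Fbar.convexOn

lemma exists_neg_t (K K' t₀ : ℝ) (hK' : 0 < K') (ht₀ : 0 < t₀) :
    ∃ t : ℝ, 0 < t ∧ t ≤ t₀ ∧ t ≤ 1 ∧ K * t + K' * (t * Real.log t) < 0 := by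
  set s := Real.exp (-(K + 1) / K') with hs
  refine ⟨min t₀ (min 1 s), lt_min ht₀ (lt_min one_pos (Real.exp_pos _)), min_le_left _ _,
    le_trans (min_le_right _ _) (min_le_left _ _), ?_⟩
  set t := min t₀ (min 1 s) with ht
  have htpos : 0 < t := lt_min ht₀ (lt_min one_pos (Real.exp_pos _))
  have hts : t ≤ s := le_trans (min_le_right _ _) (min_le_right _ _)
  have hlog : Real.log t ≤ -(K + 1) / K' := by
    calc Real.log t ≤ Real.log s := Real.log_le_log htpos hts
    _ = -(K + 1) / K' := Real.log_exp _
  have h2 : K + K' * Real.log t ≤ -1 := by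
    have := mul_le_mul_of_nonneg_left hlog (le_of_lt hK')
    rw [mul_div_cancel₀ _ (ne_of_gt hK')] at this
    linarith
  nlinarith [mul_le_mul_of_nonneg_left h2 (le_of_lt htpos)]

lemma dot_expand {n : ℕ} (M : Matrix (Fin n) (Fin n) ℝ) (x d : Fin n → ℝ) (t : ℝ) :
    (x + t • d) ⬝ᵥ M.mulVec (x + t • d)
      = x ⬝ᵥ M.mulVec x + t * (x ⬝ᵥ M.mulVec d + d ⬝ᵥ M.mulVec x)
        + t ^ 2 * (d ⬝ᵥ M.mulVec d) := by
  simp [Matrix.mulVec_add, Matrix.mulVec_smul, dotProduct_add, add_dotProduct,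
    dotProduct_smul, smul_dotProduct, smul_eq_mul]
  ring

lemma dot_lin {n : ℕ} (b x d : Fin n → ℝ) (t : ℝ) :
    b ⬝ᵥ (x + t • d) = b ⬝ᵥ x + t * (b ⬝ᵥ d) := by
  simp [dotProduct_add, dotProduct_smul, smul_eq_mul]

lemma psd_nonneg {n : ℕ} {M : Matrix (Fin n) (Fin n) ℝ} (hM : M.PosSemidef) (d : Fin n → ℝ) :
    0 ≤ d ⬝ᵥ M.mulVec d := by
  have := hM.dotProduct_mulVec_nonneg d
  simpa using this

set_option maxHeartbeats 1000000 in
lemma boundary_not_min {n : ℕ} (w : Fin n → ℝ) (hw : ∀ i, 0 < w i)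
    (a₀ : ℝ) (M : Matrix (Fin n) (Fin n) ℝ) (hM : M.PosSemidef)
    (b : Fin n → ℝ) (B : ℝ) (hB : 0 < B)
    (x : Fin n → ℝ) (hx01 : ∀ k, 0 ≤ x k ∧ x k ≤ 1)
    (hxc : ∑ k, w k * x k = a₀ * ∑ k, w k)
    (i j : Fin n) (hij : j ≠ i) (ε : ℝ) (hε : ε = 1 ∨ ε = -1)
    (hxi : x i = (1 - ε) / 2) (hδpre : 0 < ε * (x j - (1 - ε) / 2)) :
    ∃ y : Fin n → ℝ, ((∀ k, 0 ≤ y k ∧ y k ≤ 1) ∧ ∑ k, w k * y k = a₀ * ∑ k, w k) ∧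
      (1 / 2) * (y ⬝ᵥ M.mulVec y) + b ⬝ᵥ y + B * ∑ k, Fbar (y k)
        < (1 / 2) * (x ⬝ᵥ M.mulVec x) + b ⬝ᵥ x + B * ∑ k, Fbar (x k) := by
  set e : ℝ := (1 - ε) / 2 with he_def
  set δ : ℝ := ε * (x j - e) with hδ_def
  have hδ : 0 < δ := hδpre
  have hε2 : ε * ε = 1 := by rcases hε with h | h <;> rw [h] <;> norm_num
  have he : e = 0 ∨ e = 1 := by
    rcases hε with h | h
    · left; rw [he_def, h]; norm_num
    · right; rw [he_def, h]; norm_num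
  have he0 : 0 ≤ e := by rcases he with h | h <;> rw [h] <;> norm_num
  have he1 : e ≤ 1 := by rcases he with h | h <;> rw [h] <;> norm_num
  set d : Fin n → ℝ := fun k => if k = i then ε / w i else if k = j then -ε / w j else 0
    with hd_def
  have hdi : d i = ε / w i := by simp [hd_def]
  have hdj : d j = -ε / w j := by simp [hd_def, hij]
  have hd0 : ∀ k, k ≠ i → k ≠ j → d k = 0 := by
    intro k h1 h2; simp [hd_def, h1, h2]
  set α : ℝ := x ⬝ᵥ M.mulVec d + d ⬝ᵥ M.mulVec x with hα_def
  set β : ℝ := d ⬝ᵥ M.mulVec d with hβ_def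
  set γ : ℝ := b ⬝ᵥ d with hγ_def
  have hβ : 0 ≤ β := psd_nonneg hM d
  set K : ℝ := |α| / 2 + β / 2 + |γ| + B * (|Real.log (w i)| / w i) + B * (2 / (w j * δ))
    with hK_def
  set K' : ℝ := B / w i with hK'_def
  obtain ⟨t, htpos, htt₀, ht1, hneg⟩ := exists_neg_t K K' (min (w i) (w j * δ / 2))
    (div_pos hB (hw i)) (lt_min (hw i) (div_pos (mul_pos (hw j) hδ) two_pos))
  set y : Fin n → ℝ := x + t • d with hy_def
  set u : ℝ := t / w i with hu_def
  set v : ℝ := t / w j with hv_def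
  set θ : ℝ := v / δ with hθ_def
  clear_value e δ d α β γ K K' y u v θ
  have htwi : t ≤ w i := le_trans htt₀ (min_le_left _ _)
  have htwj : t ≤ w j * δ / 2 := le_trans htt₀ (min_le_right _ _)
  have hu0 : 0 < u := by rw [hu_def]; exact div_pos htpos (hw i)
  have hu1 : u ≤ 1 := by rw [hu_def]; exact (div_le_one (hw i)).mpr htwi
  have hvδ : v ≤ δ / 2 := by
    rw [hv_def, div_le_iff₀ (hw j)]
    calc t ≤ w j * δ / 2 := htwj
    _ = δ / 2 * w j := by ring
  have hv0 : 0 < v := by rw [hv_def]; exact div_pos htpos (hw j)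
  have hθ0 : 0 < θ := by rw [hθ_def]; exact div_pos hv0 hδ
  have hθhalf : θ ≤ 1 / 2 := by
    rw [hθ_def, div_le_iff₀ hδ]
    calc v ≤ δ / 2 := hvδ
    _ = 1 / 2 * δ := by ring
  have hyi : y i = e + ε * u := by
    rw [hy_def]
    simp only [Pi.add_apply, Pi.smul_apply, smul_eq_mul, hdi, hxi, hu_def]
    ring
  have hyj : y j = x j - ε * v := by
    rw [hy_def]
    simp only [Pi.add_apply, Pi.smul_apply, smul_eq_mul, hdj, hv_def]
    ring
  have hyk : ∀ k, k ≠ i → k ≠ j → y k = x k := by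
    intro k h1 h2
    rw [hy_def]
    simp [hd0 k h1 h2]
  have hεv : ε * v = θ * (x j - e) := by
    have hθδ : θ * δ = v := by rw [hθ_def]; exact div_mul_cancel₀ _ (ne_of_gt hδ)
    rw [← hθδ, hδ_def]
    linear_combination (θ * (x j - e)) * hε2
  have hyj' : y j = (1 - θ) * x j + θ * e := by
    rw [hyj]; linear_combination -hεv
  -- membership
  have hy01 : ∀ k, 0 ≤ y k ∧ y k ≤ 1 := by
    intro k
    by_cases hk : k = i
    · subst hk
      rcases hε with h | h
      · have he' : e = 0 := by rw [he_def, h]; norm_num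
        rw [hyi, he', h]
        constructor <;> linarith
      · have he' : e = 1 := by rw [he_def, h]; norm_num
        rw [hyi, he', h]
        constructor <;> linarith
    · by_cases hk2 : k = j
      · subst hk2
        rw [hyj']
        obtain ⟨hj0, hj1⟩ := hx01 k
        have m1 : 0 ≤ (1 - θ) * x k := mul_nonneg (by linarith) hj0
        have m2 : 0 ≤ θ * e := mul_nonneg hθ0.le he0
        have m3 : (1 - θ) * x k ≤ (1 - θ) * 1 := mul_le_mul_of_nonneg_left hj1 (by linarith)
        have m4 : θ * e ≤ θ * 1 := mul_le_mul_of_nonneg_left he1 hθ0.le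
        constructor <;> linarith
      · rw [hyk k hk hk2]; exact hx01 k
  have hwd : ∑ k, w k * d k = 0 := by
    have h1 : ∑ k ∈ ({j, i} : Finset (Fin n)), w k * d k = ∑ k, w k * d k := by
      refine Finset.sum_subset (Finset.subset_univ _) ?_
      intro k _ hk
      simp only [Finset.mem_insert, Finset.mem_singleton] at hk
      push_neg at hk
      rw [hd0 k hk.2 hk.1, mul_zero]
    rw [← h1, Finset.sum_pair hij, hdi, hdj]
    have e1 : w j * (-ε / w j) = -ε := by
      rw [mul_comm, div_mul_cancel₀ _ (ne_of_gt (hw j))]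
    have e2 : w i * (ε / w i) = ε := by
      rw [mul_comm, div_mul_cancel₀ _ (ne_of_gt (hw i))]
    rw [e1, e2]; ring
  have hyc : ∑ k, w k * y k = a₀ * ∑ k, w k := by
    have h1 : ∑ k, w k * y k = ∑ k, (w k * x k + t * (w k * d k)) := by
      refine Finset.sum_congr rfl fun k _ => ?_
      rw [hy_def]
      simp only [Pi.add_apply, Pi.smul_apply, smul_eq_mul]
      ring
    rw [h1, Finset.sum_add_distrib, ← Finset.mul_sum, hwd, mul_zero, add_zero, hxc]
  -- entropy sum splitting
  have hsum : ∑ k, Fbar (y k)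
      = ∑ k, Fbar (x k) + (Fbar (y i) - Fbar (x i)) + (Fbar (y j) - Fbar (x j)) := by
    have h1 : ∑ k ∈ ({j, i} : Finset (Fin n)), (Fbar (y k) - Fbar (x k))
        = ∑ k, (Fbar (y k) - Fbar (x k)) := by
      refine Finset.sum_subset (Finset.subset_univ _) ?_
      intro k _ hk
      simp only [Finset.mem_insert, Finset.mem_singleton] at hk
      push_neg at hk
      rw [hyk k hk.2 hk.1, sub_self]
    have h2 : ∑ k, Fbar (y k) - ∑ k, Fbar (x k)
        = (Fbar (y j) - Fbar (x j)) + (Fbar (y i) - Fbar (x i)) := by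
      rw [← Finset.sum_sub_distrib, ← h1, Finset.sum_pair hij]
    linarith
  have hFxi : Fbar (x i) = 0 := by
    rcases he with h | h
    · rw [hxi, h]; exact Fbar_zero
    · rw [hxi, h]; exact Fbar_one
  have hFe : Fbar e = 0 := by
    rcases he with h | h
    · rw [h]; exact Fbar_zero
    · rw [h]; exact Fbar_one
  -- entropy bounds
  have hFi : Fbar (y i) ≤ u * Real.log u := by
    have hyiu : Fbar (y i) = Fbar u := by
      rcases hε with h | h
      · have he' : e = 0 := by rw [he_def, h]; norm_num
        rw [hyi, he', h]; norm_num
      · have he' : e = 1 := by rw [he_def, h]; norm_num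
        rw [hyi, he', h, show (1:ℝ) + -1 * u = 1 - u by ring, Fbar_symm]
    rw [hyiu]
    have hlog2 : Real.log (1 - u) ≤ 0 := Real.log_nonpos (by linarith) (by linarith)
    have := mul_nonpos_of_nonneg_of_nonpos (by linarith : (0:ℝ) ≤ 1 - u) hlog2
    unfold Fbar; linarith
  have hFlog : u * Real.log u
      = (1 / w i) * (t * Real.log t) - (Real.log (w i) / w i) * t := by
    rw [hu_def, Real.log_div (ne_of_gt htpos) (ne_of_gt (hw i))]
    field_simp
  have hFi' : Fbar (y i)
      ≤ (1 / w i) * (t * Real.log t) + (|Real.log (w i)| / w i) * t := by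
    have habs : 0 ≤ (|Real.log (w i)| + Real.log (w i)) / w i * t :=
      mul_nonneg (div_nonneg (by linarith [neg_abs_le (Real.log (w i))]) (hw i).le) htpos.le
    have hexpand : (|Real.log (w i)| + Real.log (w i)) / w i * t
        = (|Real.log (w i)| / w i) * t + (Real.log (w i) / w i) * t := by ring
    linarith [hFi, hFlog]
  have hθt : θ = t / (w j * δ) := by
    rw [hθ_def, hv_def, div_div]
  have hFj : Fbar (y j) - Fbar (x j) ≤ (2 / (w j * δ)) * t := by
    have hmemj : x j ∈ Set.Icc (0:ℝ) 1 := ⟨(hx01 j).1, (hx01 j).2⟩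
    have hmeme : e ∈ Set.Icc (0:ℝ) 1 := ⟨he0, he1⟩
    have hconv := convexOn_Fbar.2 hmemj hmeme (by linarith : (0:ℝ) ≤ 1 - θ)
      (le_of_lt hθ0) (by ring)
    simp only [smul_eq_mul] at hconv
    rw [← hyj'] at hconv
    rw [hFe, mul_zero, add_zero] at hconv
    have hlow : -2 ≤ Fbar (x j) := Fbar_lower (hx01 j).1 (hx01 j).2
    have hθ2 : θ * (-Fbar (x j)) ≤ θ * 2 := mul_le_mul_of_nonneg_left (by linarith) hθ0.le
    have h2t : θ * 2 = (2 / (w j * δ)) * t := by rw [hθt]; ring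
    have hring : (1 - θ) * Fbar (x j) - Fbar (x j) = θ * (-Fbar (x j)) := by ring
    linarith [hconv, hθ2, h2t, hring]
  -- quadratic and linear expansions
  have hq : y ⬝ᵥ M.mulVec y = x ⬝ᵥ M.mulVec x + t * α + t ^ 2 * β := by
    rw [hy_def, dot_expand, hα_def, hβ_def]
  have hbl : b ⬝ᵥ y = b ⬝ᵥ x + t * γ := by
    rw [hy_def, dot_lin, hγ_def]
  refine ⟨y, ⟨hy01, hyc⟩, ?_⟩
  rw [hq, hbl, hsum, hFxi]
  have htα : t * α ≤ t * |α| := mul_le_mul_of_nonneg_left (le_abs_self α) htpos.le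
  have htγ : t * γ ≤ t * |γ| := mul_le_mul_of_nonneg_left (le_abs_self γ) htpos.le
  have htβ : t ^ 2 * β ≤ t * β := by
    have htt : t * t ≤ t * 1 := mul_le_mul_of_nonneg_left ht1 htpos.le
    have h2 := mul_le_mul_of_nonneg_right htt hβ
    calc t ^ 2 * β = t * t * β := by ring
    _ ≤ t * 1 * β := h2
    _ = t * β := by ring
  have hBFi : B * Fbar (y i)
      ≤ B * ((1 / w i) * (t * Real.log t) + (|Real.log (w i)| / w i) * t) :=
    mul_le_mul_of_nonneg_left hFi' hB.le
  have hBFj : B * (Fbar (y j) - Fbar (x j)) ≤ B * ((2 / (w j * δ)) * t) :=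
    mul_le_mul_of_nonneg_left hFj hB.le
  have hKt : K * t + K' * (t * Real.log t)
      = |α| / 2 * t + β / 2 * t + |γ| * t + B * ((|Real.log (w i)| / w i) * t)
        + B * ((2 / (w j * δ)) * t) + B * ((1 / w i) * (t * Real.log t)) := by
    rw [hK_def, hK'_def]; ring
  linarith [hneg, htα, htγ, htβ, hBFi, hBFj, hKt]

set_option maxHeartbeats 1000000 in
/-- the discrete energy
`G(x) = (1/2)·xᵀMx + bᵀx + B·Σᵢ F̄(xᵢ)` (with `M` symmetric positive semidefinite and
`B > 0`) attains its minimum over the compact convex set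
`A = {x : 0 ≤ xᵢ ≤ 1, Σ wᵢ·xᵢ = a₀·Σ wᵢ}` at a unique point `x*`, which moreover
satisfies `0 < x*ᵢ < 1` for every `i`. -/
theorem stmt_8 (n : ℕ) (hn : 1 ≤ n) (w : Fin n → ℝ) (hw : ∀ i, 0 < w i)
    (a₀ : ℝ) (ha₀0 : 0 < a₀) (ha₀1 : a₀ < 1)
    (M : Matrix (Fin n) (Fin n) ℝ) (hM : M.PosSemidef)
    (b : Fin n → ℝ) (B : ℝ) (hB : 0 < B) :
    ∃ xstar : Fin n → ℝ,
      (xstar ∈ {x : Fin n → ℝ | (∀ i, 0 ≤ x i ∧ x i ≤ 1) ∧ ∑ i, w i * x i = a₀ * ∑ i, w i}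
        ∧ (∀ y ∈ {x : Fin n → ℝ | (∀ i, 0 ≤ x i ∧ x i ≤ 1) ∧ ∑ i, w i * x i = a₀ * ∑ i, w i},
            (1 / 2) * (xstar ⬝ᵥ M.mulVec xstar) + b ⬝ᵥ xstar + B * ∑ i, Fbar (xstar i)
              ≤ (1 / 2) * (y ⬝ᵥ M.mulVec y) + b ⬝ᵥ y + B * ∑ i, Fbar (y i)))
      ∧ (∀ i, 0 < xstar i ∧ xstar i < 1)
      ∧ (∀ x' ∈ {x : Fin n → ℝ | (∀ i, 0 ≤ x i ∧ x i ≤ 1) ∧ ∑ i, w i * x i = a₀ * ∑ i, w i},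
          (∀ y ∈ {x : Fin n → ℝ | (∀ i, 0 ≤ x i ∧ x i ≤ 1) ∧ ∑ i, w i * x i = a₀ * ∑ i, w i},
            (1 / 2) * (x' ⬝ᵥ M.mulVec x') + b ⬝ᵥ x' + B * ∑ i, Fbar (x' i)
              ≤ (1 / 2) * (y ⬝ᵥ M.mulVec y) + b ⬝ᵥ y + B * ∑ i, Fbar (y i))
          → x' = xstar) := by
  classical
  have hnf : Nonempty (Fin n) := ⟨⟨0, hn⟩⟩
  have hwsum : 0 < ∑ k, w k := Finset.sum_pos (fun k _ => hw k) Finset.univ_nonempty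
  set S : Set (Fin n → ℝ) :=
    {x | (∀ i, 0 ≤ x i ∧ x i ≤ 1) ∧ ∑ i, w i * x i = a₀ * ∑ i, w i} with hS_def
  have hne : S.Nonempty := by
    refine ⟨fun _ => a₀, ⟨fun i => ⟨ha₀0.le, ha₀1.le⟩, ?_⟩⟩
    rw [← Finset.sum_mul]
    ring
  have hcomp : IsCompact S := by
    have h1 : S = (Set.univ.pi fun _ : Fin n => Set.Icc (0:ℝ) 1)
        ∩ {x | ∑ i, w i * x i = a₀ * ∑ i, w i} := by
      ext z
      simp only [hS_def, Set.mem_setOf_eq, Set.mem_inter_iff, Set.mem_pi, Set.mem_univ,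
        Set.mem_Icc, true_implies]
    rw [h1]
    exact (isCompact_univ_pi fun _ => isCompact_Icc).inter_right
      (isClosed_eq (continuous_finset_sum _ fun k _ =>
        continuous_const.mul (continuous_apply k)) continuous_const)
  have hfc : Continuous (fun z : Fin n → ℝ =>
      (1 / 2) * (z ⬝ᵥ M.mulVec z) + b ⬝ᵥ z + B * ∑ k, Fbar (z k)) := by
    refine Continuous.add (Continuous.add ?_ ?_) ?_
    · have h2 : (fun z : Fin n → ℝ => z ⬝ᵥ M.mulVec z)
          = fun z => ∑ k, z k * ∑ l, M k l * z l := by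
        funext z; simp [dotProduct, Matrix.mulVec]
      refine continuous_const.mul ?_
      rw [h2]
      exact continuous_finset_sum _ fun k _ => (continuous_apply k).mul
        (continuous_finset_sum _ fun l _ => continuous_const.mul (continuous_apply l))
    · show Continuous fun z : Fin n → ℝ => b ⬝ᵥ z
      exact continuous_finset_sum _ fun k _ => continuous_const.mul (continuous_apply k)
    · exact continuous_const.mul
        (continuous_finset_sum _ fun k _ => Fbar_continuous.comp (continuous_apply k))
  obtain ⟨xstar, hxS, hmin⟩ := hcomp.exists_isMinOn hne hfc.continuousOn
  have hmin2 : ∀ y ∈ S,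
      (1 / 2) * (xstar ⬝ᵥ M.mulVec xstar) + b ⬝ᵥ xstar + B * ∑ k, Fbar (xstar k)
        ≤ (1 / 2) * (y ⬝ᵥ M.mulVec y) + b ⬝ᵥ y + B * ∑ k, Fbar (y k) :=
    fun y hy => isMinOn_iff.mp hmin y hy
  have hx01 : ∀ k, 0 ≤ xstar k ∧ xstar k ≤ 1 := hxS.1
  have hxc : ∑ k, w k * xstar k = a₀ * ∑ k, w k := hxS.2
  have hint : ∀ i, 0 < xstar i ∧ xstar i < 1 := by
    intro i
    constructor
    · by_contra hcon
      push_neg at hcon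
      have hxi0 : xstar i = 0 := le_antisymm hcon (hx01 i).1
      have hj : ∃ j, 0 < xstar j := by
        by_contra hall
        push_neg at hall
        have hz : ∑ k, w k * xstar k = 0 :=
          Finset.sum_eq_zero fun k _ => by
            rw [le_antisymm (hall k) (hx01 k).1, mul_zero]
        rw [hxc] at hz
        exact absurd hz (ne_of_gt (mul_pos ha₀0 hwsum))
      obtain ⟨j, hj⟩ := hj
      have hji : j ≠ i := fun h => by rw [h, hxi0] at hj; exact lt_irrefl 0 hj
      obtain ⟨y, hyS, hlt⟩ := boundary_not_min w hw a₀ M hM b B hB xstar hx01 hxc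
        i j hji 1 (Or.inl rfl) (by rw [hxi0]; norm_num) (by norm_num; linarith)
      exact absurd (hmin2 y hyS) (not_le.mpr hlt)
    · by_contra hcon
      push_neg at hcon
      have hxi1 : xstar i = 1 := le_antisymm (hx01 i).2 hcon
      have hj : ∃ j, xstar j < 1 := by
        by_contra hall
        push_neg at hall
        have hz : ∑ k, w k * xstar k = ∑ k, w k :=
          Finset.sum_congr rfl fun k _ => by
            rw [le_antisymm (hx01 k).2 (hall k), mul_one]
        rw [hxc] at hz
        nlinarith
      obtain ⟨j, hj⟩ := hj
      have hji : j ≠ i := fun h => by rw [h, hxi1] at hj; exact lt_irrefl (1:ℝ) hj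
      obtain ⟨y, hyS, hlt⟩ := boundary_not_min w hw a₀ M hM b B hB xstar hx01 hxc
        i j hji (-1) (Or.inr rfl) (by rw [hxi1]; norm_num) (by norm_num; linarith)
      exact absurd (hmin2 y hyS) (not_le.mpr hlt)
  refine ⟨xstar, ⟨hxS, hmin2⟩, hint, ?_⟩
  intro x' hx'S hx'min
  by_contra hne'
  have h1 : (1 / 2) * (x' ⬝ᵥ M.mulVec x') + b ⬝ᵥ x' + B * ∑ k, Fbar (x' k)
      = (1 / 2) * (xstar ⬝ᵥ M.mulVec xstar) + b ⬝ᵥ xstar + B * ∑ k, Fbar (xstar k) :=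
    le_antisymm (hx'min xstar hxS) (hmin2 x' hx'S)
  set m : Fin n → ℝ := (1/2 : ℝ) • (x' + xstar) with hm_def
  have hmk : ∀ k, m k = (x' k + xstar k) / 2 := by
    intro k; rw [hm_def]; simp; ring
  have he1 : m ⬝ᵥ M.mulVec m
      = (1/4) * (x' ⬝ᵥ M.mulVec x') + (1/4) * (x' ⬝ᵥ M.mulVec xstar)
        + (1/4) * (xstar ⬝ᵥ M.mulVec x') + (1/4) * (xstar ⬝ᵥ M.mulVec xstar) := by
    rw [hm_def]
    simp [Matrix.mulVec_add, Matrix.mulVec_smul, dotProduct_add,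
      add_dotProduct, dotProduct_smul, smul_dotProduct, smul_eq_mul]
    ring
  have hlin : b ⬝ᵥ m = (1/2) * (b ⬝ᵥ x') + (1/2) * (b ⬝ᵥ xstar) := by
    rw [hm_def]
    simp [dotProduct_add, dotProduct_smul, smul_eq_mul]
    try ring
  have hmS : m ∈ S := by
    constructor
    · intro k
      rw [hmk k]
      obtain ⟨a1, a2⟩ := hx'S.1 k
      obtain ⟨a3, a4⟩ := hx01 k
      constructor <;> linarith
    · calc ∑ k, w k * m k = ∑ k, (w k * x' k / 2 + w k * xstar k / 2) :=
        Finset.sum_congr rfl fun k _ => by rw [hmk k]; ring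
      _ = (∑ k, w k * x' k) / 2 + (∑ k, w k * xstar k) / 2 := by
        rw [Finset.sum_add_distrib, Finset.sum_div, Finset.sum_div]
      _ = a₀ * ∑ k, w k := by rw [hx'S.2, hxc]; ring
  clear_value m
  have hpsd : 0 ≤ (x' - xstar) ⬝ᵥ M.mulVec (x' - xstar) := psd_nonneg hM _
  have he2 : (x' - xstar) ⬝ᵥ M.mulVec (x' - xstar)
      = x' ⬝ᵥ M.mulVec x' - x' ⬝ᵥ M.mulVec xstar - xstar ⬝ᵥ M.mulVec x'
        + xstar ⬝ᵥ M.mulVec xstar := by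
    simp [Matrix.mulVec_sub, dotProduct_sub, sub_dotProduct]
    ring
  obtain ⟨k₀, hk₀⟩ := Function.ne_iff.mp hne'
  have hent : ∑ k, Fbar (m k) < (1/2) * ∑ k, Fbar (x' k) + (1/2) * ∑ k, Fbar (xstar k) := by
    have hle : ∀ k ∈ Finset.univ, Fbar (m k) ≤ (1/2) * Fbar (x' k) + (1/2) * Fbar (xstar k) := by
      intro k _
      have hc := convexOn_Fbar.2 ⟨(hx'S.1 k).1, (hx'S.1 k).2⟩ ⟨(hx01 k).1, (hx01 k).2⟩
        (by norm_num : (0:ℝ) ≤ 1/2) (by norm_num : (0:ℝ) ≤ 1/2) (by norm_num)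
      simp only [smul_eq_mul] at hc
      rw [hmk k, show (x' k + xstar k) / 2 = 1/2 * x' k + 1/2 * xstar k by ring]
      exact hc
    have hstrict : Fbar (m k₀) < (1/2) * Fbar (x' k₀) + (1/2) * Fbar (xstar k₀) := by
      have hc := strictConvexOn_Fbar.2 ⟨(hx'S.1 k₀).1, (hx'S.1 k₀).2⟩
        ⟨(hx01 k₀).1, (hx01 k₀).2⟩ hk₀
        (by norm_num : (0:ℝ) < 1/2) (by norm_num : (0:ℝ) < 1/2) (by norm_num)
      simp only [smul_eq_mul] at hc
      rw [hmk k₀, show (x' k₀ + xstar k₀) / 2 = 1/2 * x' k₀ + 1/2 * xstar k₀ by ring]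
      exact hc
    calc ∑ k, Fbar (m k) < ∑ k, ((1/2) * Fbar (x' k) + (1/2) * Fbar (xstar k)) :=
      Finset.sum_lt_sum hle ⟨k₀, Finset.mem_univ k₀, hstrict⟩
    _ = (1/2) * ∑ k, Fbar (x' k) + (1/2) * ∑ k, Fbar (xstar k) := by
      rw [Finset.sum_add_distrib, ← Finset.mul_sum, ← Finset.mul_sum]
  have hBent := mul_lt_mul_of_pos_left hent hB
  have hGm_lt : (1 / 2) * (m ⬝ᵥ M.mulVec m) + b ⬝ᵥ m + B * ∑ k, Fbar (m k)
      < (1 / 2) * (xstar ⬝ᵥ M.mulVec xstar) + b ⬝ᵥ xstar + B * ∑ k, Fbar (xstar k) := by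
    linarith [hpsd, he1, he2, hlin, hBent, h1]
  exact absurd (hmin2 m hmS) (not_le.mpr hGm_lt)
end

section
/- Let ι be a nonempty finite index set, let wᵢ > 0 with Σᵢ wᵢ = 1, let fᵢ be real numbers, and set ū = Σᵢ wᵢ·fᵢ, m = minᵢ fᵢ, M = maxᵢ fᵢ. Assume m < ū < M and 0 < ū < 1, and define θ = min{1, ū/(ū − m), (1 − ū)/(M − ū)}. Then for every i, 0 ≤ ū + θ·(fᵢ − ū) ≤ 1, and Σᵢ wᵢ·(ū + θ·(fᵢ − ū)) = ū. -/
/-- the Zhang–Shu positivity-preserving limiter for the cell density.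
With nodal values `fᵢ`, quadrature weights `wᵢ > 0` summing to 1, cell average
`ū = Σ wᵢ fᵢ`, `m = min fᵢ`, `M = max fᵢ`, `m < ū < M`, `0 < ū < 1` and
`θ = min{1, ū/(ū−m), (1−ū)/(M−ū)}`, the limited nodal values `ū + θ(fᵢ − ū)` lie in
`[0, 1]` and have the same weighted average `ū`. -/
theorem stmt_9 {ι : Type*} [Fintype ι] [Nonempty ι]
    (w f : ι → ℝ) (hw : ∀ i, 0 < w i) (hwsum : ∑ i, w i = 1)
    (ubar m M θ : ℝ)
    (hubar : ubar = ∑ i, w i * f i)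
    (hm : m = Finset.univ.inf' Finset.univ_nonempty f)
    (hM : M = Finset.univ.sup' Finset.univ_nonempty f)
    (hmu : m < ubar) (huM : ubar < M) (hu0 : 0 < ubar) (hu1 : ubar < 1)
    (hθ : θ = min 1 (min (ubar / (ubar - m)) ((1 - ubar) / (M - ubar)))) :
    (∀ i, 0 ≤ ubar + θ * (f i - ubar) ∧ ubar + θ * (f i - ubar) ≤ 1)
      ∧ ∑ i, w i * (ubar + θ * (f i - ubar)) = ubar := by
  have hum : 0 < ubar - m := by linarith
  have hMu : 0 < M - ubar := by linarith
  have hθ0 : 0 ≤ θ := by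
    rw [hθ]
    have h1 : 0 ≤ ubar / (ubar - m) := by positivity
    have h2 : 0 ≤ (1 - ubar) / (M - ubar) := by
      apply div_nonneg <;> linarith
    simp [le_min_iff]; constructor <;> linarith
  have hθ1 : θ ≤ ubar / (ubar - m) := by
    rw [hθ]; exact le_trans (min_le_right _ _) (min_le_left _ _)
  have hθ2 : θ ≤ (1 - ubar) / (M - ubar) := by
    rw [hθ]; exact le_trans (min_le_right _ _) (min_le_right _ _)
  have hθmu : θ * (ubar - m) ≤ ubar := by
    calc θ * (ubar - m) ≤ (ubar / (ubar - m)) * (ubar - m) := by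
          exact mul_le_mul_of_nonneg_right hθ1 hum.le
      _ = ubar := by field_simp
  have hθMu : θ * (M - ubar) ≤ 1 - ubar := by
    calc θ * (M - ubar) ≤ ((1 - ubar) / (M - ubar)) * (M - ubar) := by
          exact mul_le_mul_of_nonneg_right hθ2 hMu.le
      _ = 1 - ubar := by field_simp
  constructor
  · intro i
    have hfm : m ≤ f i := by
      rw [hm]; exact Finset.inf'_le f (Finset.mem_univ i)
    have hfM : f i ≤ M := by
      rw [hM]; exact Finset.le_sup' f (Finset.mem_univ i)
    constructor
    · have : θ * (m - ubar) ≤ θ * (f i - ubar) :=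
        mul_le_mul_of_nonneg_left (by linarith) hθ0
      nlinarith
    · have : θ * (f i - ubar) ≤ θ * (M - ubar) :=
        mul_le_mul_of_nonneg_left (by linarith) hθ0
      linarith
  · have : ∑ i, w i * (ubar + θ * (f i - ubar))
        = ∑ i, (w i * ubar * (1 - θ) + θ * (w i * f i)) := by
      apply Finset.sum_congr rfl; intro i _; ring
    rw [this, Finset.sum_add_distrib, ← Finset.sum_mul, ← Finset.sum_mul,
      ← Finset.mul_sum, hwsum, ← hubar]
    ring
end
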